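/- For any circle graph G, ψ(G) ≤ α(G) + 1, where α(G) is the maximum size of an independent set in G. -/

import Mathlib

open SimpleGraph

/-- The circle on which chord diagrams live (the unit circle as an additive circle). -/
abbrev Circ : Type := AddCircle (1 : ℝ)

/-- A circle representation of a graph `G`: each vertex `v` gets a chord with
distinct endpoints `p v` and `q v`, all `2|V|` endpoints are distinct, and two
distinct vertices are adjacent iff their chords cross (i.e. exactly one endpoint
of one chord lies strictly inside an arc determined by the other chord). -/
structure CircleRep (V : Type) (G : SimpleGraph V) where
  p : V → Circ
  q : V → Circ
  inj : Function.Injective (Sum.elim p q)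
  adj : ∀ u v : V, G.Adj u v ↔ u ≠ v ∧
    Xor' (sbtw (p v) (p u) (q v)) (sbtw (p v) (q u) (q v))

namespace CircleRep

variable {V : Type} {G : SimpleGraph V} (R : CircleRep V G)

/-- The two open arcs of the chord of `v`: `b = true` is the arc from `p v`
clockwise to `q v`, `b = false` is the other arc. -/
def ArcSet (v : V) (b : Bool) : Set Circ :=
  if b then {x | sbtw (R.p v) x (R.q v)} else {x | sbtw (R.q v) x (R.p v)}

/-- The arc `b` of the chord of `v` is empty: it contains both endpoints of no chord. -/
def ArcEmpty (v : V) (b : Bool) : Prop :=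
  ∀ u : V, ¬ (R.p u ∈ R.ArcSet v b ∧ R.q u ∈ R.ArcSet v b)

/-- A chord is peripheral if one of its arcs is empty. -/
def Peripheral (v : V) : Prop := ∃ b : Bool, R.ArcEmpty v b

/-- A set `T` of corner points satisfies the chord of `v` if each of the two
arcs of the chord contains a corner. -/
def SatChord (T : Finset Circ) (v : V) : Prop :=
  (∃ t ∈ T, t ∈ R.ArcSet v true) ∧ (∃ t ∈ T, t ∈ R.ArcSet v false)

/-- `T` is a satisfying set of corners: the corners are distinct from all chord
endpoints and every chord has a corner in each of its arcs. -/
def GoodCorners (T : Finset Circ) : Prop :=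
  (∀ t ∈ T, ∀ v : V, t ≠ R.p v ∧ t ≠ R.q v) ∧ ∀ v : V, R.SatChord T v

/-- The polygon number `ψ_r` of a circle representation: the minimum number of
corners that must be added to satisfy all chords. -/
noncomputable def polyNum : ℕ :=
  sInf {k | ∃ T : Finset Circ, T.card = k ∧ R.GoodCorners T}

/-- `c 0, …, c (ℓ-1)` is an ℓ-independent set in series: there is a point `x`
on the circle such that a clockwise traversal starting at `x` encounters both
endpoints of `c i` before both endpoints of `c j` whenever `i < j`. -/
def SeriesIndep {ℓ : ℕ} (c : Fin ℓ → V) : Prop :=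
  Function.Injective c ∧ ∃ x : Circ,
    (∀ i : Fin ℓ, x ≠ R.p (c i) ∧ x ≠ R.q (c i)) ∧
    ∀ i j : Fin ℓ, i < j →
      ∀ e ∈ ({R.p (c i), R.q (c i)} : Set Circ),
        ∀ f ∈ ({R.p (c j), R.q (c j)} : Set Circ), sbtw x e f

end CircleRep

/-- The polygon number `ψ(G)`: the minimum `k` such that `G` has a circle
representation together with `k` corners satisfying all chords. -/
noncomputable def polygonNumber {V : Type} (G : SimpleGraph V) : ℕ :=
  sInf {k | ∃ R : CircleRep V G, ∃ T : Finset Circ, T.card = k ∧ R.GoodCorners T}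

/-- A permutation graph: a graph having a circle representation admitting two
corner points such that each chord has one corner in each of its arcs. -/
def IsPermutationGraph {V : Type} (G : SimpleGraph V) : Prop :=
  ∃ R : CircleRep V G, ∃ T : Finset Circ, T.card = 2 ∧ R.GoodCorners T

/-- The clique cover number `κ(G)`: least `n` such that the vertex set can be
partitioned into `n` cliques. -/
noncomputable def cliqueCoverNumber {V : Type} (G : SimpleGraph V) : ℕ :=
  sInf {n | ∃ f : V → Fin n, ∀ u v : V, f u = f v → u = v ∨ G.Adj u v}

/-- The independence number `α(G)`. -/
noncomputable def indepNumber {V : Type} (G : SimpleGraph V) : ℕ :=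
  sSup {n | ∃ s : Finset V, (∀ u ∈ s, ∀ v ∈ s, u ≠ v → ¬ G.Adj u v) ∧ s.card = n}

/-- `A` is an asteroidal set of `G`: for every `a ∈ A`, any two vertices of
`A \ {a}` are connected by a path in `G - N[a]`. -/
def IsAsteroidal {V : Type} (G : SimpleGraph V) (A : Set V) : Prop :=
  ∀ a ∈ A, ∀ x ∈ A, ∀ y ∈ A, x ≠ a → y ≠ a →
    ∃ (hx : x ∈ {w | w ≠ a ∧ ¬ G.Adj a w}) (hy : y ∈ {w | w ≠ a ∧ ¬ G.Adj a w}),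
      (G.induce {w | w ≠ a ∧ ¬ G.Adj a w}).Reachable ⟨x, hx⟩ ⟨y, hy⟩

/-- The asteroidal number `an(G)`: maximum size of an asteroidal set. -/
noncomputable def asteroidalNumber {V : Type} (G : SimpleGraph V) : ℕ :=
  sSup {n | ∃ A : Finset V, IsAsteroidal G ↑A ∧ A.card = n}

/-- `G` is AT-free: it has no asteroidal triple. -/
def ATFree {V : Type} (G : SimpleGraph V) : Prop :=
  ¬ ∃ a b c : V, a ≠ b ∧ a ≠ c ∧ b ≠ c ∧ IsAsteroidal G {a, b, c}

/-- `G` is distance hereditary: in every connected induced subgraph, distances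
agree with those of `G`. -/
def DistanceHereditary {V : Type} (G : SimpleGraph V) : Prop :=
  ∀ s : Set V, (G.induce s).Connected →
    ∀ u v : ↥s, (G.induce s).dist u v = G.dist (u : V) (v : V)

/-- `{V1, V2}` is a split of `G`. -/
def IsSplit {V : Type} (G : SimpleGraph V) (V1 V2 : Set V) : Prop :=
  V1 ∪ V2 = Set.univ ∧ Disjoint V1 V2 ∧ 1 < V1.ncard ∧ 1 < V2.ncard ∧
    ∀ x ∈ V1, ∀ y ∈ V2,
      (G.Adj x y ↔ (∃ y' ∈ V2, G.Adj x y') ∧ (∃ x' ∈ V1, G.Adj x' y))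


/-! ### Auxiliary machinery for `stmt9` -/

/-- Strict cyclic order predicate on reals (representatives in `[0,1)`). -/
def cyc3 (a b c : ℝ) : Prop := (a < b ∧ b < c) ∨ (b < c ∧ c < a) ∨ (c < a ∧ a < b)

lemma toIcoMod_eval' {a b : ℝ} (ha : a ∈ Set.Ico (0:ℝ) 1) (hb : b ∈ Set.Ico (0:ℝ) 1) :
    toIcoMod one_pos a b = if a ≤ b then b else b + 1 := by
  obtain ⟨ha0, ha1⟩ := ha; obtain ⟨hb0, hb1⟩ := hb
  split_ifs with h
  · exact (toIcoMod_eq_self one_pos).2 ⟨h, by linarith⟩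
  · rw [← toIcoMod_add_right one_pos]
    exact (toIcoMod_eq_self one_pos).2 ⟨by linarith, by linarith⟩

lemma toIocMod_eval' {a b : ℝ} (ha : a ∈ Set.Ico (0:ℝ) 1) (hb : b ∈ Set.Ico (0:ℝ) 1) :
    toIocMod one_pos a b = if a < b then b else b + 1 := by
  obtain ⟨ha0, ha1⟩ := ha; obtain ⟨hb0, hb1⟩ := hb
  split_ifs with h
  · exact (toIocMod_eq_self one_pos).2 ⟨h, by linarith⟩
  · rw [← toIocMod_add_right one_pos]
    exact (toIocMod_eq_self one_pos).2 ⟨by linarith, by linarith⟩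

lemma btw_coe_iff3 {a b c : ℝ} (ha : a ∈ Set.Ico (0:ℝ) 1) (hb : b ∈ Set.Ico (0:ℝ) 1)
    (hc : c ∈ Set.Ico (0:ℝ) 1) :
    Btw.btw (↑a : Circ) ↑b ↑c ↔
      (if a ≤ b then b else b + 1) ≤ (if a < c then c else c + 1) := by
  rw [show Btw.btw (↑a : Circ) ↑b ↑c ↔ toIcoMod one_pos a b ≤ toIocMod one_pos a c from
    QuotientAddGroup.btw_coe_iff, toIcoMod_eval' ha hb, toIocMod_eval' ha hc]

set_option maxHeartbeats 3000000 in
lemma sbtw_coe_iff3 {a b c : ℝ} (ha : a ∈ Set.Ico (0:ℝ) 1) (hb : b ∈ Set.Ico (0:ℝ) 1)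
    (hc : c ∈ Set.Ico (0:ℝ) 1) :
    sbtw (↑a : Circ) ↑b ↑c ↔ cyc3 a b c := by
  rw [sbtw_iff_btw_not_btw, btw_coe_iff3 ha hb hc, btw_coe_iff3 hc hb ha, cyc3]
  obtain ⟨ha0, ha1⟩ := ha; obtain ⟨hb0, hb1⟩ := hb; obtain ⟨hc0, hc1⟩ := hc
  split_ifs <;> push_neg <;> constructor <;> intro h <;>
  first
    | (refine ⟨?_, ?_⟩ <;> (rcases h with ⟨h1,h2⟩|⟨h1,h2⟩|⟨h1,h2⟩) <;> linarith)
    | (obtain ⟨g1, g2⟩ := h;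
       rcases lt_trichotomy a b with t1|t1|t1 <;> rcases lt_trichotomy b c with t2|t2|t2 <;>
         rcases lt_trichotomy c a with t3|t3|t3 <;>
       first
         | (left; exact ⟨by linarith, by linarith⟩)
         | (right; left; exact ⟨by linarith, by linarith⟩)
         | (right; right; exact ⟨by linarith, by linarith⟩)
         | linarith)

lemma btw_translate (a b c t : Circ) : Btw.btw (a + t) (b + t) (c + t) ↔ Btw.btw a b c := by
  show (QuotientAddGroup.equivIcoMod _ 0 (b + t - (a + t)) : ℝ) ≤
      (QuotientAddGroup.equivIocMod _ 0 (c + t - (a + t)) : ℝ) ↔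
      (QuotientAddGroup.equivIcoMod _ 0 (b - a) : ℝ) ≤
      (QuotientAddGroup.equivIocMod _ 0 (c - a) : ℝ)
  rw [show b + t - (a + t) = b - a by abel, show c + t - (a + t) = c - a by abel]

lemma sbtw_translate (a b c t : Circ) : sbtw (a + t) (b + t) (c + t) ↔ sbtw a b c := by
  rw [sbtw_iff_btw_not_btw, sbtw_iff_btw_not_btw, btw_translate, btw_translate]

lemma cyc3_out {a b e : ℝ} (h : (e < a ∧ e < b) ∨ (a < e ∧ b < e)) : cyc3 a e b ↔ b < a := by
  unfold cyc3
  constructor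
  · rintro (⟨h1, h2⟩ | ⟨h1, h2⟩ | ⟨h1, h2⟩) <;> rcases h with ⟨g1, g2⟩ | ⟨g1, g2⟩ <;> linarith
  · intro h'
    rcases h with ⟨g1, g2⟩ | ⟨g1, g2⟩
    · exact Or.inr (Or.inl ⟨g2, h'⟩)
    · exact Or.inr (Or.inr ⟨h', g1⟩)

lemma greedyCorners {V : Type} [Fintype V] (A B : V → ℝ)
    (hAB : ∀ v, A v < B v) (hA0 : ∀ v, 0 < A v) (hB1 : ∀ v, B v < 1)
    (hinj : ∀ u v : V, u ≠ v → A u ≠ A v ∧ A u ≠ B v ∧ B u ≠ A v ∧ B u ≠ B v) :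
    ∀ (N : ℕ) (t : ℝ), (Finset.univ.filter (fun v => t < A v)).card ≤ N →
    ∃ (m : ℕ) (T : Finset ℝ) (c : Fin m → V),
      T.card = m ∧ (∀ s ∈ T, t < s ∧ s < 1) ∧ (∀ s ∈ T, ∀ v, s ≠ A v ∧ s ≠ B v) ∧
      (∀ v, t < A v → ∃ s ∈ T, A v < s ∧ s < B v) ∧
      Function.Injective c ∧ (∀ i, t < A (c i)) ∧ (∀ i j, i < j → B (c i) < A (c j)) := by
  classical
  intro N
  induction N with
  | zero =>
    intro t ht
    refine ⟨0, ∅, fun i => i.elim0, by simp, by simp, by simp, ?_, fun i j h => i.elim0,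
      fun i => i.elim0, fun i => i.elim0⟩
    intro v hv
    exact absurd (Finset.card_eq_zero.1 (Nat.le_zero.1 ht) ▸ Finset.mem_filter.2
      ⟨Finset.mem_univ v, hv⟩) (by simp)
  | succ N IH =>
    intro t ht
    by_cases hne : (Finset.univ.filter (fun v => t < A v)).Nonempty
    · -- the active set is nonempty
      set S := Finset.univ.filter (fun v => t < A v) with hS
      have hBne : (S.image B).Nonempty := hne.image B
      set r := (S.image B).min' hBne with hr
      obtain ⟨v0, hv0S, hv0⟩ := Finset.mem_image.1 ((S.image B).min'_mem hBne)
      have hv0t : t < A v0 := (Finset.mem_filter.1 hv0S).2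
      -- all active chords have B v ≥ r
      have hrle : ∀ v, t < A v → r ≤ B v := fun v hv =>
        Finset.min'_le _ _ (Finset.mem_image_of_mem B (Finset.mem_filter.2 ⟨Finset.mem_univ v, hv⟩))
      have hrv0 : r = B v0 := hv0.symm
      have htr : t < r := by rw [hrv0]; exact lt_trans hv0t (hAB v0)
      -- M : largest relevant point below r
      set E : Finset ℝ := Finset.univ.image A ∪ Finset.univ.image B with hE
      set M := (insert t (E.filter (fun y => y < r))).max' (Finset.insert_nonempty t _) with hM
      have hMr : M < r := by
        rw [hM, Finset.max'_lt_iff]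
        intro y hy
        rcases Finset.mem_insert.1 hy with h | h
        · exact h ▸ htr
        · exact (Finset.mem_filter.1 h).2
      have htM : t ≤ M := by
        rw [hM]; exact Finset.le_max' _ _ (Finset.mem_insert_self _ _)
      set s := (M + r) / 2 with hs
      have hMs : M < s := by rw [hs]; linarith
      have hsr : s < r := by rw [hs]; linarith
      have hts : t < s := lt_of_le_of_lt htM hMs
      have hs1 : s < 1 := lt_trans hsr (hrv0 ▸ hB1 v0)
      -- every endpoint is either ≤ M or ≥ r, hence ≠ s
      have hEnd : ∀ e ∈ E, e ≤ M ∨ r ≤ e := by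
        intro e he
        rcases lt_or_ge e r with h | h
        · refine Or.inl ?_
          have hmem : e ∈ insert t (E.filter (fun y => y < r)) :=
            Finset.mem_insert_of_mem (Finset.mem_filter.2 ⟨he, h⟩)
          rw [hM]
          exact Finset.le_max' _ _ hmem
        · exact Or.inr h
      have hendA : ∀ v, A v ≤ M ∨ r ≤ A v := fun v =>
        hEnd _ (Finset.mem_union_left _ (Finset.mem_image_of_mem A (Finset.mem_univ v)))
      have hendB : ∀ v, B v ≤ M ∨ r ≤ B v := fun v =>
        hEnd _ (Finset.mem_union_right _ (Finset.mem_image_of_mem B (Finset.mem_univ v)))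
      have hsA : ∀ v, s ≠ A v := by
        intro v h; rcases hendA v with h' | h' <;> rw [h] at hMs hsr <;> linarith
      have hsB : ∀ v, s ≠ B v := by
        intro v h; rcases hendB v with h' | h' <;> rw [h] at hMs hsr <;> linarith
      have hAv0M : A v0 ≤ M := by
        rcases hendA v0 with h | h
        · exact h
        · exact absurd (hrv0 ▸ hAB v0) (not_lt.2 h)
      -- apply IH at threshold s
      have hsubset : Finset.univ.filter (fun v => s < A v) ⊆ S.erase v0 := by
        intro v hv
        have hv' : s < A v := (Finset.mem_filter.1 hv).2
        refine Finset.mem_erase.2 ⟨?_, Finset.mem_filter.2 ⟨Finset.mem_univ v, lt_trans hts hv'⟩⟩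
        rintro rfl; linarith
      have hcard : (Finset.univ.filter (fun v => s < A v)).card ≤ N := by
        calc (Finset.univ.filter (fun v => s < A v)).card ≤ (S.erase v0).card :=
              Finset.card_le_card hsubset
          _ = S.card - 1 := Finset.card_erase_of_mem hv0S
          _ ≤ N := by omega
      obtain ⟨m', T', c', hT'card, hT'range, hT'end, hT'split, hc'inj, hc't, hc'ser⟩ := IH s hcard
      -- chords beyond s start after r
      have hc'r : ∀ i, r < A (c' i) := by
        intro i
        rcases hendA (c' i) with h | h
        · exact absurd (hc't i) (not_lt.2 (le_trans h (le_of_lt hMs)))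
        · rcases lt_or_eq_of_le h with h' | h'
          · exact h'
          · exfalso
            have hne' : c' i ≠ v0 := by
              intro h''; rw [h''] at h'; linarith [hc't i, hAv0M, hMs]
            exact (hinj (c' i) v0 hne').2.1 (h' ▸ hrv0 ▸ rfl)
      refine ⟨m' + 1, insert s T', Fin.cons v0 c', ?_, ?_, ?_, ?_, ?_, ?_, ?_⟩
      · rw [Finset.card_insert_of_notMem (fun h => lt_irrefl s (hT'range s h).1), hT'card]
      · intro y hy
        rcases Finset.mem_insert.1 hy with h | h
        · exact h ▸ ⟨hts, hs1⟩
        · exact ⟨lt_trans hts (hT'range y h).1, (hT'range y h).2⟩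
      · intro y hy v
        rcases Finset.mem_insert.1 hy with h | h
        · exact h ▸ ⟨hsA v, hsB v⟩
        · exact hT'end y h v
      · intro v hv
        rcases lt_or_ge s (A v) with h | h
        · obtain ⟨y, hy, hy'⟩ := hT'split v h
          exact ⟨y, Finset.mem_insert_of_mem hy, hy'⟩
        · refine ⟨s, Finset.mem_insert_self _ _, lt_of_le_of_ne h (fun h' => hsA v h'.symm), ?_⟩
          exact lt_of_lt_of_le hsr (hrle v hv)
      · refine Fin.cons_injective_iff.2 ⟨?_, hc'inj⟩
        rintro ⟨i, rfl⟩
        linarith [hc't i, hAv0M, hMs]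
      · intro i
        rcases Fin.eq_zero_or_eq_succ i with rfl | ⟨i', rfl⟩
        · simpa using hv0t
        · simpa using lt_trans hts (hc't i')
      · intro i j hij
        rcases Fin.eq_zero_or_eq_succ j with rfl | ⟨j', rfl⟩
        · exact absurd hij (Fin.not_lt_zero i)
        rcases Fin.eq_zero_or_eq_succ i with rfl | ⟨i', rfl⟩
        · simpa [hrv0.symm] using hc'r j'
        · simpa using hc'ser i' j' (by simpa using hij)
    · -- no active chord
      refine ⟨0, ∅, fun i => i.elim0, by simp, by simp, by simp, ?_, fun i j h => i.elim0,
        fun i => i.elim0, fun i => i.elim0⟩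
      intro v hv
      exact absurd ⟨v, Finset.mem_filter.2 ⟨Finset.mem_univ v, hv⟩⟩ hne


/-- for any circle graph `G`, `ψ(G) ≤ α(G) + 1`. -/
theorem stmt9 {V : Type} [Fintype V] (G : SimpleGraph V)
    (hcirc : Nonempty (CircleRep V G)) :
    polygonNumber G ≤ indepNumber G + 1 := by
  classical
  obtain ⟨R⟩ := hcirc
  haveI : Infinite Circ := by
    haveI := Set.Ico.infinite (show (0:ℝ) < 0 + 1 by norm_num)
    exact Infinite.of_injective _ (AddCircle.equivIco (1:ℝ) 0).symm.injective
  obtain ⟨x, hx⟩ := Infinite.exists_notMem_finset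
    (Finset.univ.image R.p ∪ Finset.univ.image R.q)
  have hxp : ∀ v, x ≠ R.p v := fun v h =>
    hx (Finset.mem_union_left _ (Finset.mem_image.2 ⟨v, Finset.mem_univ v, h.symm⟩))
  have hxq : ∀ v, x ≠ R.q v := fun v h =>
    hx (Finset.mem_union_right _ (Finset.mem_image.2 ⟨v, Finset.mem_univ v, h.symm⟩))
  set φ : Circ → ℝ := fun z => ((AddCircle.equivIco (1:ℝ) 0 (z - x)) : ℝ) with hφdef
  have hφmem : ∀ z, φ z ∈ Set.Ico (0:ℝ) 1 := by
    intro z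
    have := (AddCircle.equivIco (1:ℝ) 0 (z - x)).2
    simpa [hφdef] using this
  have hφinj : Function.Injective φ := by
    intro z w h
    have h2 := (AddCircle.equivIco (1:ℝ) 0).injective (Subtype.ext h)
    exact sub_left_inj.1 h2
  have hcoe : ∀ z : Circ, ((φ z : ℝ) : Circ) = z - x := fun z =>
    (AddCircle.equivIco (1:ℝ) 0).symm_apply_apply (z - x)
  have hcoeinj : ∀ r s : ℝ, r ∈ Set.Ico (0:ℝ) 1 → s ∈ Set.Ico (0:ℝ) 1 →
      ((r : Circ) = (s : Circ)) → r = s := by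
    intro r s hr hs h
    exact (AddCircle.coe_eq_coe_iff_of_mem_Ico (p := (1:ℝ)) (a := (0:ℝ))
      (by simpa using hr) (by simpa using hs)).1 h
  have hφx : φ x = 0 := by
    refine hcoeinj _ _ (hφmem x) (by norm_num) ?_
    rw [hcoe x, sub_self]
    norm_num
  have hsb : ∀ u v w : Circ, sbtw u v w ↔ cyc3 (φ u) (φ v) (φ w) := by
    intro u v w
    have h1 := sbtw_translate (u - x) (v - x) (w - x) x
    rw [sub_add_cancel, sub_add_cancel, sub_add_cancel] at h1
    rw [h1, ← hcoe u, ← hcoe v, ← hcoe w]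
    exact sbtw_coe_iff3 (hφmem u) (hφmem v) (hφmem w)
  set A : V → ℝ := fun v => min (φ (R.p v)) (φ (R.q v)) with hAdef
  set B : V → ℝ := fun v => max (φ (R.p v)) (φ (R.q v)) with hBdef
  have hsum : ∀ i j : V ⊕ V, i ≠ j → φ (Sum.elim R.p R.q i) ≠ φ (Sum.elim R.p R.q j) :=
    fun i j hij h => hij (R.inj (hφinj h))
  have hpqφ : ∀ v, φ (R.p v) ≠ φ (R.q v) := fun v =>
    hsum (Sum.inl v) (Sum.inr v) (by simp)
  have hAB : ∀ v, A v < B v := fun v => min_lt_max.2 (hpqφ v)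
  have hp0 : ∀ v, 0 < φ (R.p v) := fun v =>
    lt_of_le_of_ne (hφmem _).1 (fun h => hxp v (hφinj (hφx.trans h)))
  have hq0 : ∀ v, 0 < φ (R.q v) := fun v =>
    lt_of_le_of_ne (hφmem _).1 (fun h => hxq v (hφinj (hφx.trans h)))
  have hA0 : ∀ v, 0 < A v := fun v => lt_min (hp0 v) (hq0 v)
  have hB1 : ∀ v, B v < 1 := fun v => max_lt (hφmem _).2 (hφmem _).2
  have hend : ∀ v : V, ∀ e : ℝ, (e = A v ∨ e = B v) → e = φ (R.p v) ∨ e = φ (R.q v) := by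
    intro v e he
    rcases he with rfl | rfl
    · exact min_choice _ _
    · exact max_choice _ _
  have hsep2 : ∀ u v : V, u ≠ v → ∀ e f : ℝ, (e = φ (R.p u) ∨ e = φ (R.q u)) →
      (f = φ (R.p v) ∨ f = φ (R.q v)) → e ≠ f := by
    intro u v huv e f he hf
    rcases he with rfl | rfl <;> rcases hf with rfl | rfl
    · exact hsum (Sum.inl u) (Sum.inl v) (by simpa using huv)
    · exact hsum (Sum.inl u) (Sum.inr v) (by simp)
    · exact hsum (Sum.inr u) (Sum.inl v) (by simp)
    · exact hsum (Sum.inr u) (Sum.inr v) (by simpa using huv)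
  have hinj4 : ∀ u v : V, u ≠ v → A u ≠ A v ∧ A u ≠ B v ∧ B u ≠ A v ∧ B u ≠ B v :=
    fun u v huv =>
      ⟨hsep2 u v huv _ _ (hend u _ (Or.inl rfl)) (hend v _ (Or.inl rfl)),
       hsep2 u v huv _ _ (hend u _ (Or.inl rfl)) (hend v _ (Or.inr rfl)),
       hsep2 u v huv _ _ (hend u _ (Or.inr rfl)) (hend v _ (Or.inl rfl)),
       hsep2 u v huv _ _ (hend u _ (Or.inr rfl)) (hend v _ (Or.inr rfl))⟩
  obtain ⟨m, T', c, hTc, hTr, hTe, hTs, hcinj, hct, hcser⟩ :=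
    greedyCorners A B hAB hA0 hB1 hinj4 (Fintype.card V) 0
      (le_trans (Finset.card_filter_le _ _) (le_of_eq Finset.card_univ))
  have hψ : ∀ s : ℝ, 0 ≤ s → s < 1 → φ (x + (s : Circ)) = s := by
    intro s h0 h1
    refine hcoeinj _ _ (hφmem _) ⟨h0, h1⟩ ?_
    rw [hcoe]
    abel
  have hinjOn : Set.InjOn (fun s : ℝ => x + (s : Circ)) ↑T' := by
    intro a ha b hb h
    have ha' := hTr a ha; have hb' := hTr b hb
    have h2 := congrArg φ h
    rwa [hψ a (le_of_lt ha'.1) ha'.2, hψ b (le_of_lt hb'.1) hb'.2] at h2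
  have hxnot : x ∉ T'.image (fun s : ℝ => x + (s : Circ)) := by
    intro h
    obtain ⟨s, hs, hsx⟩ := Finset.mem_image.1 h
    have h2 := congrArg φ hsx
    rw [hψ s (le_of_lt (hTr s hs).1) (hTr s hs).2, hφx] at h2
    exact (hTr s hs).1.ne' h2
  have hcardT : (insert x (T'.image fun s : ℝ => x + (s : Circ))).card = m + 1 := by
    rw [Finset.card_insert_of_notMem hxnot, Finset.card_image_of_injOn hinjOn, hTc]
  have hArcT : ∀ (v : V) (z : Circ),
      z ∈ R.ArcSet v true ↔ cyc3 (φ (R.p v)) (φ z) (φ (R.q v)) := by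
    intro v z
    have harc : R.ArcSet v true = {y | sbtw (R.p v) y (R.q v)} := by
      simp [CircleRep.ArcSet]
    rw [harc]
    exact hsb _ _ _
  have hArcF : ∀ (v : V) (z : Circ),
      z ∈ R.ArcSet v false ↔ cyc3 (φ (R.q v)) (φ z) (φ (R.p v)) := by
    intro v z
    have harc : R.ArcSet v false = {y | sbtw (R.q v) y (R.p v)} := by
      simp [CircleRep.ArcSet]
    rw [harc]
    exact hsb _ _ _
  have hgood : R.GoodCorners (insert x (T'.image fun s : ℝ => x + (s : Circ))) := by
    constructor
    · intro tc htc v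
      rcases Finset.mem_insert.1 htc with rfl | h
      · exact ⟨hxp v, hxq v⟩
      · obtain ⟨s, hs, rfl⟩ := Finset.mem_image.1 h
        have hsA := hTe s hs v
        have hφs := hψ s (le_of_lt (hTr s hs).1) (hTr s hs).2
        constructor
        · intro h'
          have h2 := congrArg φ h'
          rw [hφs] at h2
          have hin : φ (R.p v) = A v ∨ φ (R.p v) = B v := by
            rcases le_total (φ (R.p v)) (φ (R.q v)) with hle | hle
            · exact Or.inl (min_eq_left hle).symm
            · exact Or.inr (max_eq_left hle).symm
          rcases hin with he | he
          · exact hsA.1 (h2.trans he)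
          · exact hsA.2 (h2.trans he)
        · intro h'
          have h2 := congrArg φ h'
          rw [hφs] at h2
          have hin : φ (R.q v) = A v ∨ φ (R.q v) = B v := by
            rcases le_total (φ (R.p v)) (φ (R.q v)) with hle | hle
            · exact Or.inr (max_eq_right hle).symm
            · exact Or.inl (min_eq_right hle).symm
          rcases hin with he | he
          · exact hsA.1 (h2.trans he)
          · exact hsA.2 (h2.trans he)
    · intro v
      obtain ⟨s, hsT, hsl, hsr⟩ := hTs v (hA0 v)
      have hφs := hψ s (le_of_lt (hTr s hsT).1) (hTr s hsT).2
      have hsmem : (x + (s : Circ)) ∈ insert x (T'.image fun s : ℝ => x + (s : Circ)) :=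
        Finset.mem_insert_of_mem (Finset.mem_image_of_mem _ hsT)
      have hxmem : x ∈ insert x (T'.image fun s : ℝ => x + (s : Circ)) :=
        Finset.mem_insert_self _ _
      rcases lt_or_gt_of_ne (hpqφ v) with hor | hor
      · have hA' : A v = φ (R.p v) := min_eq_left (le_of_lt hor)
        have hB' : B v = φ (R.q v) := max_eq_right (le_of_lt hor)
        constructor
        · refine ⟨x + (s : Circ), hsmem, (hArcT v _).2 (Or.inl ⟨?_, ?_⟩)⟩
          · rw [hφs, ← hA']; exact hsl
          · rw [hφs, ← hB']; exact hsr
        · refine ⟨x, hxmem, (hArcF v _).2 (Or.inr (Or.inl ⟨?_, hor⟩))⟩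
          rw [hφx]; exact hp0 v
      · have hA' : A v = φ (R.q v) := min_eq_right (le_of_lt hor)
        have hB' : B v = φ (R.p v) := max_eq_left (le_of_lt hor)
        constructor
        · refine ⟨x, hxmem, (hArcT v _).2 (Or.inr (Or.inl ⟨?_, hor⟩))⟩
          rw [hφx]; exact hq0 v
        · refine ⟨x + (s : Circ), hsmem, (hArcF v _).2 (Or.inl ⟨?_, ?_⟩)⟩
          · rw [hφs, ← hA']; exact hsl
          · rw [hφs, ← hB']; exact hsr
  have hpoly : polygonNumber G ≤ m + 1 :=
    Nat.sInf_le ⟨R, insert x (T'.image fun s : ℝ => x + (s : Circ)), hcardT, hgood⟩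
  have houter : ∀ i j : Fin m, i < j →
      ∀ e : ℝ, (e = φ (R.p (c i)) ∨ e = φ (R.q (c i))) → e < A (c j) := by
    intro i j hij e he
    have h1 : e ≤ B (c i) := by
      rcases he with rfl | rfl
      · exact le_max_left _ _
      · exact le_max_right _ _
    exact lt_of_le_of_lt h1 (hcser i j hij)
  have hnadj : ∀ i j : Fin m, i ≠ j → ¬ G.Adj (c i) (c j) := by
    intro i j hij hadj
    obtain ⟨-, hxor⟩ := (R.adj (c i) (c j)).1 hadj
    rw [hsb, hsb] at hxor
    have hiff : cyc3 (φ (R.p (c j))) (φ (R.p (c i))) (φ (R.q (c j))) ↔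
        cyc3 (φ (R.p (c j))) (φ (R.q (c i))) (φ (R.q (c j))) := by
      rcases lt_or_gt_of_ne hij with hlt | hlt
      · have hpa := houter i j hlt _ (Or.inl rfl)
        have hqa := houter i j hlt _ (Or.inr rfl)
        have hAp : A (c j) ≤ φ (R.p (c j)) := min_le_left _ _
        have hAq : A (c j) ≤ φ (R.q (c j)) := min_le_right _ _
        rw [cyc3_out (Or.inl ⟨lt_of_lt_of_le hpa hAp, lt_of_lt_of_le hpa hAq⟩),
            cyc3_out (Or.inl ⟨lt_of_lt_of_le hqa hAp, lt_of_lt_of_le hqa hAq⟩)]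
      · have key : ∀ e : ℝ, (e = φ (R.p (c i)) ∨ e = φ (R.q (c i))) → B (c j) < e := by
          intro e he
          have h1 : A (c i) ≤ e := by
            rcases he with rfl | rfl
            · exact min_le_left _ _
            · exact min_le_right _ _
          exact lt_of_lt_of_le (hcser j i hlt) h1
        have hpa := key _ (Or.inl rfl)
        have hqa := key _ (Or.inr rfl)
        have hBp : φ (R.p (c j)) ≤ B (c j) := le_max_left _ _
        have hBq : φ (R.q (c j)) ≤ B (c j) := le_max_right _ _
        rw [cyc3_out (Or.inr ⟨lt_of_le_of_lt hBp hpa, lt_of_le_of_lt hBq hpa⟩),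
            cyc3_out (Or.inr ⟨lt_of_le_of_lt hBp hqa, lt_of_le_of_lt hBq hqa⟩)]
    rcases hxor with ⟨h1, h2⟩ | ⟨h1, h2⟩
    · exact h2 (hiff.1 h1)
    · exact h2 (hiff.2 h1)
  have hindep : m ≤ indepNumber G := by
    have hmem : m ∈ {n | ∃ s : Finset V,
        (∀ u ∈ s, ∀ v ∈ s, u ≠ v → ¬ G.Adj u v) ∧ s.card = n} := by
      refine ⟨Finset.univ.image c, ?_, ?_⟩
      · intro u hu v hv huv
        obtain ⟨i, -, rfl⟩ := Finset.mem_image.1 hu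
        obtain ⟨j, -, rfl⟩ := Finset.mem_image.1 hv
        exact hnadj i j (fun h => huv (congrArg c h))
      · rw [Finset.card_image_of_injective _ hcinj, Finset.card_univ, Fintype.card_fin]
    have hbdd : BddAbove {n | ∃ s : Finset V,
        (∀ u ∈ s, ∀ v ∈ s, u ≠ v → ¬ G.Adj u v) ∧ s.card = n} := by
      refine ⟨Fintype.card V, ?_⟩
      rintro n ⟨s, -, rfl⟩
      exact le_trans (Finset.card_le_univ s) (le_of_eq Finset.card_univ)
    exact le_csSup hbdd hmem
  calc polygonNumber G ≤ m + 1 := hpoly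
    _ ≤ indepNumber G + 1 := by omega
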